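/- Let p be an odd prime and let r ≥ 4 be even. Define eᵢ = p−1 for 1 ≤ i ≤ r−2, and let e_{r−1}, e_r be positive integers less than p with e_{r−1} ≠ e_r and e_{r−1} + e_r even. Then the tuple (e₁,…,e_r) is not numerically p-admissible. -/
import Mathlib


/-- The triangle inequality for a triple of naturals. -/
def Triangle (a b c : ℕ) : Prop := a ≤ b + c ∧ b ≤ a + c ∧ c ≤ a + b

/-- Numerical `p`-admissibility for an `r`-tuple `(e 1, …, e r)` with all `eᵢ < p`. -/
def NumericallyPAdmissible (p r : ℕ) (e : ℕ → ℕ) : Prop :=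
  ∃ e' : ℕ → ℕ,
    e' 1 = e 1 ∧ e' (r - 1) = e r ∧
    (∀ m, 2 ≤ m → m ≤ r - 2 → 0 < e' m ∧ ¬ p ∣ e' m) ∧
    (∀ m, 1 ≤ m → m < r - 1 →
      Triangle (e' m) (e (m + 1)) (e' (m + 1)) ∧
      Odd (e' m + e (m + 1) + e' (m + 1)) ∧
      e' m + e (m + 1) + e' (m + 1) < 2 * p)

/-- Example 4.3 (even `r`): for `p` an odd prime and even `r ≥ 4`, the tuple with
`eᵢ = p − 1` for `i ≤ r − 2` and `e_{r−1} ≠ e_r`, `e_{r−1} + e_r` even, is not numerically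
`p`-admissible. -/
theorem example_tuple_not_admissible_even (p : ℕ) (hp : p.Prime) (hodd : Odd p)
    (r : ℕ) (hr : 4 ≤ r) (hreven : Even r) (e : ℕ → ℕ)
    (he : ∀ i, 1 ≤ i → i ≤ r - 2 → e i = p - 1)
    (he1 : 0 < e (r - 1)) (he1p : e (r - 1) < p)
    (he2 : 0 < e r) (he2p : e r < p)
    (hne : e (r - 1) ≠ e r) (hsumeven : Even (e (r - 1) + e r)) :
    ¬ NumericallyPAdmissible p r e := by
  rintro ⟨e', h1, h2, hpos, hcons⟩
  have hp3 : 3 ≤ p := by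
    have h2le := hp.two_le
    obtain ⟨k, hk⟩ := hodd
    omega
  have hpodd : p % 2 = 1 := Nat.odd_iff.mp hodd
  -- key: consecutive e' sum to p
  have key : ∀ m, 1 ≤ m → m + 1 ≤ r - 2 → e' m + e' (m + 1) = p := by
    intro m hm hm2
    obtain ⟨htri, hoddsum, hlt⟩ := hcons m hm (by omega)
    have hem : e (m + 1) = p - 1 := he (m + 1) (by omega) hm2
    obtain ⟨t1, t2, t3⟩ := htri
    rw [hem] at t3 hoddsum hlt
    have hodd' := Nat.odd_iff.mp hoddsum
    omega
  have alt : ∀ m, 1 ≤ m → m ≤ r - 2 →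
      (m % 2 = 1 ∧ e' m = p - 1) ∨ (m % 2 = 0 ∧ e' m = 1) := by
    intro m
    induction m with
    | zero => omega
    | succ n ih =>
      intro hh1 hh2
      rcases Nat.eq_zero_or_pos n with hn | hn
      · subst hn
        left
        refine ⟨by omega, ?_⟩
        rw [h1, he 1 le_rfl (by omega)]
      · have hk := key n (by omega) (by omega)
        have hih := ih (by omega) (by omega)
        omega
  have heven2 : (r - 2) % 2 = 0 := by
    obtain ⟨k, hk⟩ := hreven; omega
  have hval := alt (r - 2) (by omega) le_rfl
  have hval' : e' (r - 2) = 1 := by omega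
  obtain ⟨htri, hodds, _⟩ := hcons (r - 2) (by omega) (by omega)
  have hrr : r - 2 + 1 = r - 1 := by omega
  rw [hrr, h2] at htri hodds
  obtain ⟨t1, t2, t3⟩ := htri
  have hse := Nat.even_iff.mp hsumeven
  omega
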